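/- Let d ≥ 2 and let C be a Hermitian matrix on ℂ^d⊗ℂ^d with eigenvalues λ1 ≥ … ≥ λ_{d²} satisfying λ_n = λ_{n+1} = … = λ_{d²−4+n} for some n ∈ {1,2,3,4}. Then λ(tr_1[C]) ⊕ λ(tr_2[C]) ≺ λ(tr_1[Λ]) ⊕ λ(tr_2[Λ]), where Λ is the diagonal matrix on ℂ^d⊗ℂ^d with diagonal (λ1, …, λ_{d²}) in decreasing order (with respect to the lexicographic index ordering). -/

import Mathlib

open Matrix Finset Kronecker
open scoped ComplexOrder

/-- The first partial trace of a matrix on `ℂ^{d1} ⊗ ℂ^{d2}` (index pairs `(i,s)` ordered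
lexicographically): `(tr_1 C)_{s,t} = ∑_i C_{(i,s),(i,t)}`. -/
noncomputable def ptrace1 {d1 d2 : ℕ} (C : Matrix (Fin d1 × Fin d2) (Fin d1 × Fin d2) ℂ) :
    Matrix (Fin d2) (Fin d2) ℂ :=
  Matrix.of fun s t => ∑ i : Fin d1, C (i, s) (i, t)

/-- The second partial trace: `(tr_2 C)_{i,j} = ∑_s C_{(i,s),(j,s)}`. -/
noncomputable def ptrace2 {d1 d2 : ℕ} (C : Matrix (Fin d1 × Fin d2) (Fin d1 × Fin d2) ℂ) :
    Matrix (Fin d1) (Fin d1) ℂ :=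
  Matrix.of fun i j => ∑ s : Fin d2, C (i, s) (j, s)

/-- The sum of the `k` largest entries of the vector `x` (the largest value of a sum of `k`
entries of `x`), i.e. `∑_{i=1}^k x_i^↓`. -/
noncomputable def maxSum {ι : Type*} [Fintype ι] (x : ι → ℝ) (k : ℕ) : ℝ :=
  sSup {s : ℝ | ∃ A : Finset ι, A.card = k ∧ s = ∑ i ∈ A, x i}

/-- `x ≺ y` (majorization): for every `k`, the sum of the `k` largest entries of `x` is at
most the sum of the `k` largest entries of `y`, and the total sums are equal. -/
def Majorizes {ι κ : Type*} [Fintype ι] [Fintype κ] (x : ι → ℝ) (y : κ → ℝ) : Prop :=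
  (∀ k : ℕ, maxSum x k ≤ maxSum y k) ∧ ∑ i, x i = ∑ j, y j

/-- `x ≺_w y` (weak majorization). -/
def WeakMajorizes {ι κ : Type*} [Fintype ι] [Fintype κ] (x : ι → ℝ) (y : κ → ℝ) : Prop :=
  ∀ k : ℕ, maxSum x k ≤ maxSum y k

set_option linter.unusedSectionVars false

lemma maxSum_bddAbove {ι : Type*} [Fintype ι] (x : ι → ℝ) (k : ℕ) :
    BddAbove {s : ℝ | ∃ A : Finset ι, A.card = k ∧ s = ∑ i ∈ A, x i} := by
  classical
  apply Set.Finite.bddAbove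
  apply Set.Finite.subset (Set.finite_range (fun B : Finset ι => ∑ i ∈ B, x i))
  rintro s ⟨B, -, rfl⟩
  exact ⟨B, rfl⟩

lemma le_maxSum {ι : Type*} [Fintype ι] (x : ι → ℝ) (A : Finset ι) :
    ∑ i ∈ A, x i ≤ maxSum x A.card :=
  le_csSup (maxSum_bddAbove x A.card) ⟨A, rfl, rfl⟩

lemma maxSum_le {ι : Type*} [Fintype ι] (x : ι → ℝ) (k : ℕ) (hk : k ≤ Fintype.card ι)
    (v : ℝ) (h : ∀ A : Finset ι, A.card = k → ∑ i ∈ A, x i ≤ v) : maxSum x k ≤ v := by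
  classical
  apply csSup_le
  · obtain ⟨t, -, ht⟩ := Finset.exists_subset_card_eq (show k ≤ #(Finset.univ : Finset ι) by simpa using hk)
    exact ⟨∑ i ∈ t, x i, t, ht, rfl⟩
  · rintro s ⟨A, hA, rfl⟩
    exact h A hA

lemma maxSum_of_card_lt {ι : Type*} [Fintype ι] (x : ι → ℝ) (k : ℕ)
    (hk : Fintype.card ι < k) : maxSum x k = 0 := by
  classical
  have : {s : ℝ | ∃ A : Finset ι, A.card = k ∧ s = ∑ i ∈ A, x i} = ∅ := by
    ext s
    simp only [Set.mem_setOf_eq, Set.mem_empty_iff_false, iff_false]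
    rintro ⟨A, hA, -⟩
    have := Finset.card_le_univ A
    rw [hA] at this
    omega
  rw [maxSum, this, Real.sSup_empty]

/-- Rearrangement-type bound: if `0 ≤ s ≤ 1` pointwise and `∑ s = t`, then
`∑ μ i * s i ≤ ∑_{i < t} μ i` for antitone `μ`. -/
lemma sum_mul_le_topsum {N : ℕ} (μ : Fin N → ℝ) (hμ : Antitone μ) (s : Fin N → ℝ)
    (h0 : ∀ i, 0 ≤ s i) (h1 : ∀ i, s i ≤ 1) (t : ℕ) (ht : ∑ i, s i = t) :
    ∑ i, μ i * s i ≤ ∑ i ∈ Finset.univ.filter (fun i : Fin N => (i : ℕ) < t), μ i := by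
  classical
  rcases Nat.eq_zero_or_pos N with rfl | hN
  · simp
  have htN : t ≤ N := by
    have : (t : ℝ) ≤ N := by
      rw [← ht]
      calc ∑ i, s i ≤ ∑ _i : Fin N, (1:ℝ) := Finset.sum_le_sum fun i _ => h1 i
        _ = N := by simp
    exact_mod_cast this
  set y : ℝ := μ ⟨min t (N-1), by omega⟩ with hy
  have key : ∑ i, μ i * s i - ∑ i ∈ Finset.univ.filter (fun i : Fin N => (i : ℕ) < t), μ i ≤ 0 := by
    have hsum : ∑ i ∈ Finset.univ.filter (fun i : Fin N => (i : ℕ) < t), μ i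
        = ∑ i, μ i * (if (i : ℕ) < t then 1 else 0) := by
      rw [Finset.sum_filter]
      exact Finset.sum_congr rfl fun i _ => by split <;> simp
    rw [hsum, ← Finset.sum_sub_distrib]
    have hterm : ∀ i : Fin N, μ i * s i - μ i * (if (i : ℕ) < t then 1 else 0)
        ≤ y * (s i - (if (i : ℕ) < t then 1 else 0)) := by
      intro i
      rcases lt_or_ge (i : ℕ) t with h | h
      · simp only [if_pos h]
        have hyi : y ≤ μ i := hμ (by simp [Fin.le_def]; omega)
        nlinarith [h1 i]
      · simp only [if_neg (Nat.not_lt.mpr h)]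
        have hyi : μ i ≤ y := hμ (by simp [Fin.le_def]; omega)
        nlinarith [h0 i]
    calc ∑ i, (μ i * s i - μ i * (if (i : ℕ) < t then 1 else 0))
        ≤ ∑ i, y * (s i - (if (i : ℕ) < t then 1 else 0)) := Finset.sum_le_sum fun i _ => hterm i
      _ = y * (∑ i, s i - ∑ i : Fin N, (if (i : ℕ) < t then 1 else 0)) := by
          rw [← Finset.mul_sum, Finset.sum_sub_distrib]
      _ = 0 := by
          have : ∑ i : Fin N, (if (i : ℕ) < t then (1:ℝ) else 0) = t := by
            rw [Fin.sum_univ_eq_sum_range (fun x => if x < t then (1:ℝ) else 0)]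
            rw [← Finset.sum_filter]
            have : (Finset.range N).filter (· < t) = Finset.range t := by
              ext x; simp [Finset.mem_range]; omega
            simp [this]
          rw [this, ht]; ring
  linarith

lemma diag_re_nonneg_of_psd {m : Type*} [Fintype m] [DecidableEq m] {S : Matrix m m ℂ}
    (hS : S.PosSemidef) (i : m) : 0 ≤ (S i i).re := by
  have h := hS.dotProduct_mulVec_nonneg (Pi.single i 1)
  have : dotProduct (star (Pi.single i 1)) (S *ᵥ Pi.single i 1) = S i i := by
    simp [dotProduct, mulVec_single, Pi.single_apply, Finset.sum_ite_eq]
  rw [this] at h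
  exact (Complex.le_def.mp h).1

lemma trace_re_eq_sum_diag_re {m : Type*} [Fintype m] (S : Matrix m m ℂ) :
    (Matrix.trace S).re = ∑ i, (S i i).re := by
  simp [Matrix.trace, Matrix.diag, Complex.re_sum]

/-- Key bound: if `0 ≤ R ≤ 1` with `tr R = t`, then `Re tr(R C) ≤ ∑_{i<t} μ_i`. -/
lemma proj_trace_bound {m : Type*} [Fintype m] [DecidableEq m] {C : Matrix m m ℂ}
    (hC : C.IsHermitian) {N : ℕ} (μ : Fin N → ℝ) (hμ : Antitone μ) (g : Fin N ≃ m)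
    (hg : ∀ k, μ k = hC.eigenvalues (g k)) {R : Matrix m m ℂ} (hR : R.PosSemidef)
    (hR1 : (1 - R).PosSemidef) (t : ℕ) (htr : R.trace = (t : ℂ)) :
    (R * C).trace.re ≤ ∑ i ∈ Finset.univ.filter (fun i : Fin N => (i : ℕ) < t), μ i := by
  classical
  set U : Matrix m m ℂ := (hC.eigenvectorUnitary : Matrix m m ℂ) with hU
  have hUmem := hC.eigenvectorUnitary.2
  have hsUU : star U * U = 1 := Matrix.mem_unitaryGroup_iff'.mp hUmem
  have hUsU : U * star U = 1 := Matrix.mem_unitaryGroup_iff.mp hUmem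
  set S : Matrix m m ℂ := star U * R * U with hSdef
  have hS : S.PosSemidef := hR.conjTranspose_mul_mul_same U
  have hS1 : (1 - S).PosSemidef := by
    have : (1 : Matrix m m ℂ) - S = star U * (1 - R) * U := by
      rw [Matrix.mul_sub, Matrix.sub_mul, Matrix.mul_one, hsUU]
    rw [this]
    exact hR1.conjTranspose_mul_mul_same U
  -- trace identity
  have key : S * Matrix.diagonal (RCLike.ofReal ∘ hC.eigenvalues) = star U * (R * C) * U := by
    conv_rhs => rw [hC.spectral_theorem, Unitary.conjStarAlgAut_apply, ← hU]
    simp only [hSdef, Matrix.mul_assoc, hsUU, Matrix.mul_one]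
  have htrace : (R * C).trace = ∑ ρ : m, S ρ ρ * (hC.eigenvalues ρ : ℂ) := by
    have h4 : (S * Matrix.diagonal (RCLike.ofReal ∘ hC.eigenvalues)).trace = (R * C).trace := by
      rw [key, Matrix.trace_mul_cycle, hUsU, Matrix.one_mul]
    rw [← h4, Matrix.trace]
    apply Finset.sum_congr rfl
    intro ρ _
    simp [Matrix.diag, Matrix.mul_diagonal, RCLike.ofReal]
  set s : Fin N → ℝ := fun i => (S (g i) (g i)).re with hs
  have h0 : ∀ i, 0 ≤ s i := fun i => diag_re_nonneg_of_psd hS (g i)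
  have h1 : ∀ i, s i ≤ 1 := by
    intro i
    have := diag_re_nonneg_of_psd hS1 (g i)
    have h11 : ((1 - S) (g i) (g i)).re = 1 - s i := by
      simp [Matrix.sub_apply, Matrix.one_apply, hs]
    linarith [h11 ▸ this]
  have hsum : ∑ i, s i = t := by
    have h2 : ∑ i : Fin N, s i = ∑ ρ : m, (S ρ ρ).re := Equiv.sum_comp g (fun ρ => (S ρ ρ).re)
    have h3 : (Matrix.trace S).re = (Matrix.trace R).re := by
      rw [hSdef, Matrix.trace_mul_cycle, hUsU, Matrix.one_mul]
    rw [h2, ← trace_re_eq_sum_diag_re, h3, htr]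
    simp
  have hre : (R * C).trace.re = ∑ i : Fin N, μ i * s i := by
    rw [htrace, Complex.re_sum]
    rw [← Equiv.sum_comp g (fun ρ => (S ρ ρ * ((hC.eigenvalues ρ : ℝ) : ℂ)).re)]
    apply Finset.sum_congr rfl
    intro i _
    rw [hg i, hs]
    simp [Complex.mul_re]
    ring
  rw [hre]
  exact sum_mul_le_topsum μ hμ s h0 h1 t hsum

section kron
variable {n₁ n₂ : Type*} [Fintype n₁] [Fintype n₂] [DecidableEq n₁] [DecidableEq n₂]

lemma conjTranspose_kron (A : Matrix n₁ n₁ ℂ) (B : Matrix n₂ n₂ ℂ) :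
    (A ⊗ₖ B)ᴴ = Aᴴ ⊗ₖ Bᴴ := by
  ext ⟨i, s⟩ ⟨j, t⟩
  simp [Matrix.conjTranspose_apply, Matrix.kroneckerMap_apply]

lemma psd_kron {A : Matrix n₁ n₁ ℂ} {B : Matrix n₂ n₂ ℂ} (hA : A.PosSemidef)
    (hB : B.PosSemidef) : (A ⊗ₖ B).PosSemidef := by
  exact hA.kronecker hB

lemma kron_id1 (Q : Matrix n₁ n₁ ℂ) (P : Matrix n₂ n₂ ℂ) :
    (1 : Matrix (n₁ × n₂) (n₁ × n₂) ℂ) - Q ⊗ₖ P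
      = (1 - Q) ⊗ₖ P + (1 : Matrix n₁ n₁ ℂ) ⊗ₖ (1 - P) := by
  ext ⟨i, s⟩ ⟨j, t⟩
  simp [Matrix.kroneckerMap_apply, Matrix.one_apply, Prod.ext_iff]
  by_cases h1 : i = j <;> by_cases h2 : s = t <;> simp [h1, h2] <;> ring

lemma kron_id2 (Q : Matrix n₁ n₁ ℂ) (P : Matrix n₂ n₂ ℂ) :
    Q ⊗ₖ (1 : Matrix n₂ n₂ ℂ) + (1 : Matrix n₁ n₁ ℂ) ⊗ₖ P + (1 - Q) ⊗ₖ (1 - P)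
      = 1 + Q ⊗ₖ P := by
  ext ⟨i, s⟩ ⟨j, t⟩
  simp [Matrix.kroneckerMap_apply, Matrix.one_apply, Prod.ext_iff]
  by_cases h1 : i = j <;> by_cases h2 : s = t <;> simp [h1, h2] <;> ring

end kron

section projOf
variable {d : ℕ}

/-- Spectral projection of a Hermitian matrix onto eigenvectors indexed by `T`. -/
noncomputable def projOf {A : Matrix (Fin d) (Fin d) ℂ} (hA : A.IsHermitian)
    (T : Finset (Fin d)) : Matrix (Fin d) (Fin d) ℂ :=
  (hA.eigenvectorUnitary : Matrix (Fin d) (Fin d) ℂ)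
    * Matrix.diagonal (fun j => if j ∈ T then (1 : ℂ) else 0)
    * star (hA.eigenvectorUnitary : Matrix (Fin d) (Fin d) ℂ)

lemma projOf_psd {A : Matrix (Fin d) (Fin d) ℂ} (hA : A.IsHermitian) (T : Finset (Fin d)) :
    (projOf hA T).PosSemidef := by
  apply Matrix.PosSemidef.mul_mul_conjTranspose_same
  apply Matrix.PosSemidef.diagonal
  intro j
  dsimp only
  split <;> norm_num

lemma one_sub_projOf_psd {A : Matrix (Fin d) (Fin d) ℂ} (hA : A.IsHermitian)
    (T : Finset (Fin d)) : (1 - projOf hA T).PosSemidef := by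
  have hU := hA.eigenvectorUnitary.2
  have hUsU : (hA.eigenvectorUnitary : Matrix (Fin d) (Fin d) ℂ)
      * star (hA.eigenvectorUnitary : Matrix (Fin d) (Fin d) ℂ) = 1 :=
    Matrix.mem_unitaryGroup_iff.mp hU
  have : (1 : Matrix (Fin d) (Fin d) ℂ) - projOf hA T
      = (hA.eigenvectorUnitary : Matrix (Fin d) (Fin d) ℂ)
        * Matrix.diagonal (fun j => if j ∈ T then (0 : ℂ) else 1)
        * star (hA.eigenvectorUnitary : Matrix (Fin d) (Fin d) ℂ) := by
    have hDD : Matrix.diagonal (fun j => if j ∈ T then (0:ℂ) else 1)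
        = 1 - Matrix.diagonal (fun j => if j ∈ T then (1:ℂ) else 0) := by
      ext i j
      by_cases hij : i = j <;>
        simp [Matrix.diagonal_apply, hij, Matrix.one_apply] <;> split <;> norm_num
    rw [hDD, Matrix.mul_sub, Matrix.mul_one, Matrix.sub_mul, hUsU, projOf]
  rw [this]
  apply Matrix.PosSemidef.mul_mul_conjTranspose_same
  apply Matrix.PosSemidef.diagonal
  intro j
  dsimp only
  split <;> norm_num

lemma projOf_trace {A : Matrix (Fin d) (Fin d) ℂ} (hA : A.IsHermitian) (T : Finset (Fin d)) :
    (projOf hA T).trace = (T.card : ℂ) := by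
  have hU := hA.eigenvectorUnitary.2
  have hsUU : star (hA.eigenvectorUnitary : Matrix (Fin d) (Fin d) ℂ)
      * (hA.eigenvectorUnitary : Matrix (Fin d) (Fin d) ℂ) = 1 :=
    Matrix.mem_unitaryGroup_iff'.mp hU
  rw [projOf, Matrix.trace_mul_cycle, hsUU, Matrix.one_mul, Matrix.trace_diagonal]
  rw [Finset.sum_ite_mem, Finset.univ_inter]
  simp

lemma projOf_trace_mul {A : Matrix (Fin d) (Fin d) ℂ} (hA : A.IsHermitian) (T : Finset (Fin d)) :
    (projOf hA T * A).trace = ((∑ j ∈ T, hA.eigenvalues j : ℝ) : ℂ) := by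
  have hU := hA.eigenvectorUnitary.2
  have hsUU : star (hA.eigenvectorUnitary : Matrix (Fin d) (Fin d) ℂ)
      * (hA.eigenvectorUnitary : Matrix (Fin d) (Fin d) ℂ) = 1 :=
    Matrix.mem_unitaryGroup_iff'.mp hU
  set U : Matrix (Fin d) (Fin d) ℂ := (hA.eigenvectorUnitary : Matrix (Fin d) (Fin d) ℂ)
  have e1 : projOf hA T * A
      = (U * Matrix.diagonal (fun j => if j ∈ T then (1 : ℂ) else 0)) * (star U * A) := by
    rw [projOf]
    simp only [Matrix.mul_assoc]
    rfl
  have hdiag : star U * A * U = Matrix.diagonal (RCLike.ofReal ∘ hA.eigenvalues) := by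
    have h := hA.conjStarAlgAut_star_eigenvectorUnitary
    rw [Unitary.conjStarAlgAut_apply, Unitary.coe_star, star_star] at h
    exact h
  rw [e1, Matrix.trace_mul_comm, ← Matrix.mul_assoc,
    hdiag, Matrix.diagonal_mul_diagonal, Matrix.trace_diagonal]
  push_cast
  rw [Finset.sum_congr rfl (fun j (_ : j ∈ Finset.univ) => by
    show _ * (if j ∈ T then (1:ℂ) else 0) = if j ∈ T then ((hA.eigenvalues j : ℝ) : ℂ) else 0
    split <;> simp)]
  rw [Finset.sum_ite_mem, Finset.univ_inter]

end projOf

lemma trace_one_kron_mul {d1 d2 : ℕ} (P : Matrix (Fin d2) (Fin d2) ℂ)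
    (C : Matrix (Fin d1 × Fin d2) (Fin d1 × Fin d2) ℂ) :
    (((1 : Matrix (Fin d1) (Fin d1) ℂ) ⊗ₖ P) * C).trace = (P * ptrace1 C).trace := by
  rw [Matrix.trace, Matrix.trace]
  simp only [Matrix.diag, Matrix.mul_apply, Matrix.kroneckerMap_apply, Matrix.one_apply,
    ptrace1, Matrix.of_apply, Fintype.sum_prod_type, ite_mul, one_mul, zero_mul, mul_assoc]
  simp only [Finset.sum_ite_eq, Finset.mem_univ, if_true, Finset.mul_sum]
  rw [Finset.sum_comm]
  apply Finset.sum_congr rfl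
  intro s _
  refine (Finset.sum_congr rfl fun y _ => ?_).trans Finset.sum_comm
  rw [Finset.sum_comm]
  exact Finset.sum_congr rfl fun x1 _ => by simp

lemma trace_kron_one_mul {d1 d2 : ℕ} (Q : Matrix (Fin d1) (Fin d1) ℂ)
    (C : Matrix (Fin d1 × Fin d2) (Fin d1 × Fin d2) ℂ) :
    ((Q ⊗ₖ (1 : Matrix (Fin d2) (Fin d2) ℂ)) * C).trace = (Q * ptrace2 C).trace := by
  rw [Matrix.trace, Matrix.trace]
  simp only [Matrix.diag, Matrix.mul_apply, Matrix.kroneckerMap_apply, Matrix.one_apply,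
    ptrace2, Matrix.of_apply, Fintype.sum_prod_type, mul_ite, mul_one, mul_zero, ite_mul,
    zero_mul, Finset.mul_sum]
  simp only [Finset.sum_ite_eq, Finset.mem_univ, if_true]
  apply Finset.sum_congr rfl
  intro i _
  rw [Finset.sum_comm]

lemma stepB {d : ℕ} (C : Matrix (Fin d × Fin d) (Fin d × Fin d) ℂ) (hC : C.IsHermitian)
    (htr1 : (ptrace1 C).IsHermitian) (htr2 : (ptrace2 C).IsHermitian)
    (μ : Fin (d*d) → ℝ) (hμ : Antitone μ) (g : Fin (d*d) ≃ Fin d × Fin d)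
    (hg : ∀ k, μ k = hC.eigenvalues (g k)) (S1 S2 : Finset (Fin d)) :
    ∑ s ∈ S1, htr1.eigenvalues s + ∑ j ∈ S2, htr2.eigenvalues j ≤
      (∑ i ∈ Finset.univ.filter (fun i : Fin (d*d) => (i:ℕ) < S1.card * S2.card), μ i)
      + ∑ i ∈ Finset.univ.filter
          (fun i : Fin (d*d) => (i:ℕ) < d*d - (d - S1.card)*(d - S2.card)), μ i := by
  classical
  set P := projOf htr1 S1 with hP
  set Q := projOf htr2 S2 with hQ
  have hPpsd := projOf_psd htr1 S1
  have hQpsd := projOf_psd htr2 S2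
  have hP'psd := one_sub_projOf_psd htr1 S1
  have hQ'psd := one_sub_projOf_psd htr2 S2
  set R : Matrix (Fin d × Fin d) (Fin d × Fin d) ℂ := Q ⊗ₖ P with hR
  set R' : Matrix (Fin d × Fin d) (Fin d × Fin d) ℂ := (1 - Q) ⊗ₖ (1 - P) with hR'
  have hRpsd : R.PosSemidef := psd_kron hQpsd hPpsd
  have hRsub : (1 - R).PosSemidef := by
    rw [hR, kron_id1]
    exact (psd_kron hQ'psd hPpsd).add (psd_kron Matrix.PosSemidef.one hP'psd)
  have hR'psd : R'.PosSemidef := psd_kron hQ'psd hP'psd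
  have hR'sub : (1 - R').PosSemidef := by
    rw [hR', kron_id1]
    have h1 : (1 : Matrix (Fin d) (Fin d) ℂ) - (1 - Q) = Q := sub_sub_cancel 1 Q
    have h2 : (1 : Matrix (Fin d) (Fin d) ℂ) - (1 - P) = P := sub_sub_cancel 1 P
    rw [h1, h2]
    exact (psd_kron hQpsd hP'psd).add (psd_kron Matrix.PosSemidef.one hPpsd)
  -- traces
  have htrR : R.trace = ((S1.card * S2.card : ℕ) : ℂ) := by
    rw [hR, Matrix.trace_kronecker, projOf_trace, projOf_trace]
    push_cast
    ring
  have hl1 : d - S1.card ≤ d := Nat.sub_le _ _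
  have hcard1 : S1.card ≤ d := by simpa using Finset.card_le_univ S1
  have hcard2 : S2.card ≤ d := by simpa using Finset.card_le_univ S2
  have htrR' : R'.trace = (((d - S1.card) * (d - S2.card) : ℕ) : ℂ) := by
    rw [hR', Matrix.trace_kronecker]
    have e1 : (1 - P).trace = ((d - S1.card : ℕ) : ℂ) := by
      rw [Matrix.trace_sub, Matrix.trace_one, projOf_trace]
      simp [Nat.cast_sub hcard1]
    have e2 : (1 - Q).trace = ((d - S2.card : ℕ) : ℂ) := by
      rw [Matrix.trace_sub, Matrix.trace_one, projOf_trace]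
      simp [Nat.cast_sub hcard2]
    rw [e1, e2]
    push_cast
    ring
  have hll : (d - S1.card) * (d - S2.card) ≤ d * d := Nat.mul_le_mul hl1 (Nat.sub_le _ _)
  have htr1R' : (1 - R').trace = ((d*d - (d - S1.card) * (d - S2.card) : ℕ) : ℂ) := by
    rw [Matrix.trace_sub, Matrix.trace_one, htrR', Nat.cast_sub hll]
    simp [Nat.cast_mul]
  -- bounds
  have hb1 := proj_trace_bound hC μ hμ g hg hRpsd hRsub (S1.card * S2.card) htrR
  have hb2 := proj_trace_bound hC μ hμ g hg hR'sub (by rw [sub_sub_cancel]; exact hR'psd)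
      (d*d - (d - S1.card) * (d - S2.card)) htr1R'
  -- the matrix identity
  have hid : Q ⊗ₖ (1 : Matrix (Fin d) (Fin d) ℂ) + (1 : Matrix (Fin d) (Fin d) ℂ) ⊗ₖ P
      = R + (1 - R') := by
    have h := kron_id2 Q P
    rw [← hR, ← hR'] at h
    calc Q ⊗ₖ (1 : Matrix (Fin d) (Fin d) ℂ) + (1 : Matrix (Fin d) (Fin d) ℂ) ⊗ₖ P
        = (Q ⊗ₖ (1 : Matrix (Fin d) (Fin d) ℂ)
            + (1 : Matrix (Fin d) (Fin d) ℂ) ⊗ₖ P + R') - R' := by abel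
      _ = (1 + R) - R' := by rw [h]
      _ = R + (1 - R') := by abel
  -- eigen sums
  have hsum1 : (((1 : Matrix (Fin d) (Fin d) ℂ) ⊗ₖ P) * C).trace
      = ((∑ s ∈ S1, htr1.eigenvalues s : ℝ) : ℂ) := by
    rw [trace_one_kron_mul, hP, projOf_trace_mul]
  have hsum2 : ((Q ⊗ₖ (1 : Matrix (Fin d) (Fin d) ℂ)) * C).trace
      = ((∑ j ∈ S2, htr2.eigenvalues j : ℝ) : ℂ) := by
    rw [trace_kron_one_mul, hQ, projOf_trace_mul]
  have key : ((∑ s ∈ S1, htr1.eigenvalues s : ℝ) : ℂ) + ((∑ j ∈ S2, htr2.eigenvalues j : ℝ) : ℂ)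
      = (R * C).trace + ((1 - R') * C).trace := by
    rw [← hsum1, ← hsum2, ← Matrix.trace_add, ← Matrix.add_mul, ← Matrix.trace_add,
      ← Matrix.add_mul, ← hid]
    rw [add_comm (Q ⊗ₖ 1)]
  have keyre : ∑ s ∈ S1, htr1.eigenvalues s + ∑ j ∈ S2, htr2.eigenvalues j
      = (R * C).trace.re + ((1 - R') * C).trace.re := by
    have := congrArg Complex.re key
    simpa using this
  rw [keyre]
  exact add_le_add hb1 hb2

section arith

lemma prod_small (a b : ℕ) (h1 : 1 ≤ a + b) (h3 : a + b ≤ 3) : a * b + 1 ≤ a + b := by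
  have ha : a ≤ 3 := by omega
  have hb : b ≤ 3 := by omega
  interval_cases a <;> interval_cases b <;> omega

lemma prod_small' (k1 k2 : ℕ) (h1 : 1 ≤ k1 + k2) (h : k1 ≤ 1 ∨ k2 ≤ 1) :
    k1 * k2 + 1 ≤ k1 + k2 := by
  rcases h with h | h
  · have : k1 ≤ 1 := h
    interval_cases k1 <;> omega
  · have : k2 ≤ 1 := h
    interval_cases k2 <;> omega

variable {N : ℕ} {F : ℕ → ℝ} {c : ℝ} {p q : ℕ}

lemma Sle (hFanti : ∀ i j : ℕ, i ≤ j → j < N → F j ≤ F i)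
    (hc : ∀ x, p ≤ x → x + q + 1 ≤ N → F x = c) (hN : p + q + 1 ≤ N)
    (r r' : ℕ) (hr : r ≤ N) (hr' : r' ≤ N)
    (h : (r' ≤ r ∧ p ≤ r') ∨ (r ≤ r' ∧ r' + q ≤ N)) :
    ∑ x ∈ Finset.range r, F x ≤ (∑ x ∈ Finset.range r', F x) + c * ((r : ℝ) - (r' : ℝ)) := by
  rcases h with ⟨hle, hp⟩ | ⟨hle, hq⟩
  · rw [← Finset.sum_range_add_sum_Ico F hle]
    have hbound : ∑ x ∈ Finset.Ico r' r, F x ≤ ((r - r' : ℕ) : ℝ) * c := by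
      have hub : ∀ x ∈ Finset.Ico r' r, F x ≤ c := by
        intro x hx
        obtain ⟨h1, h2⟩ := Finset.mem_Ico.mp hx
        have hfp : F x ≤ F p := hFanti p x (le_trans hp h1) (lt_of_lt_of_le h2 hr)
        have : F p = c := hc p le_rfl hN
        linarith
      calc ∑ x ∈ Finset.Ico r' r, F x ≤ (Finset.Ico r' r).card • c :=
            Finset.sum_le_card_nsmul _ _ c hub
        _ = ((r - r' : ℕ) : ℝ) * c := by rw [Nat.card_Ico, nsmul_eq_mul]
    have hcast : ((r - r' : ℕ) : ℝ) = (r : ℝ) - (r' : ℝ) := by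
      push_cast [Nat.cast_sub hle]
      ring
    rw [hcast] at hbound
    linarith
  · rw [← Finset.sum_range_add_sum_Ico F hle]
    have hbound : ((r' - r : ℕ) : ℝ) * c ≤ ∑ x ∈ Finset.Ico r r', F x := by
      have hlb : ∀ x ∈ Finset.Ico r r', c ≤ F x := by
        intro x hx
        obtain ⟨h1, h2⟩ := Finset.mem_Ico.mp hx
        have hx' : x ≤ N - 1 - q := by omega
        have hfp : F (N - 1 - q) ≤ F x := hFanti x (N - 1 - q) hx' (by omega)
        have : F (N - 1 - q) = c := hc _ (by omega) (by omega)
        linarith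
      calc ((r' - r : ℕ) : ℝ) * c = (Finset.Ico r r').card • c := by
            rw [Nat.card_Ico, nsmul_eq_mul]
        _ ≤ ∑ x ∈ Finset.Ico r r', F x := Finset.card_nsmul_le_sum _ _ c hlb
    have hcast : ((r' - r : ℕ) : ℝ) = (r' : ℝ) - (r : ℝ) := by
      push_cast [Nat.cast_sub hle]
      ring
    rw [hcast] at hbound
    linarith

lemma blocksum (F : ℕ → ℝ) (d : ℕ) : ∀ t : ℕ,
    ∑ j ∈ Finset.range t, ∑ x ∈ Finset.range d, F (x + d * j)
      = ∑ x ∈ Finset.range (d * t), F x := by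
  intro t
  induction t with
  | zero => simp
  | succ t ih =>
    rw [Finset.sum_range_succ, ih, Nat.mul_succ, ← Finset.sum_range_add_sum_Ico F
      (Nat.le_add_right (d * t) d), Finset.sum_Ico_eq_sum_range]
    simp only [Nat.add_sub_cancel_left]
    congr 1
    apply Finset.sum_congr rfl
    intro x _
    congr 1
    omega

end arith

lemma stepC {d : ℕ} (hd : 2 ≤ d) (F : ℕ → ℝ) (c : ℝ) (p q : ℕ) (hpq : p + q = 3)
    (hFanti : ∀ i j : ℕ, i ≤ j → j < d*d → F j ≤ F i)
    (hc : ∀ x, p ≤ x → x + q + 1 ≤ d*d → F x = c)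
    (k1 k2 : ℕ) (hk1 : k1 ≤ d) (hk2 : k2 ≤ d) :
    ∃ m t : ℕ, m ≤ d ∧ t ≤ d ∧ m + t = k1 + k2 ∧
      (∑ x ∈ Finset.range (k1*k2), F x)
        + (∑ x ∈ Finset.range (d*d - (d-k1)*(d-k2)), F x)
      ≤ (∑ s ∈ Finset.range m, ∑ i ∈ Finset.range d, F (s + d*i))
        + ∑ x ∈ Finset.range (d*t), F x := by
  have hN4 : 4 ≤ d*d := by nlinarith
  have hNpq : p + q + 1 ≤ d*d := by omega
  rcases eq_or_lt_of_le hd with hd2 | hd3'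
  · -- d = 2 : explicit case analysis
    subst hd2
    interval_cases k1 <;> interval_cases k2
    · exact ⟨0, 0, by norm_num, by norm_num, by norm_num, by norm_num⟩
    · refine ⟨0, 1, by norm_num, by norm_num, by norm_num, ?_⟩
      norm_num [Finset.sum_range_succ]
    · refine ⟨0, 2, by norm_num, by norm_num, by norm_num, ?_⟩
      norm_num [Finset.sum_range_succ]
    · refine ⟨0, 1, by norm_num, by norm_num, by norm_num, ?_⟩
      norm_num [Finset.sum_range_succ]
    · refine ⟨1, 1, by norm_num, by norm_num, by norm_num, ?_⟩
      norm_num [Finset.sum_range_succ]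
      try linarith
    · refine ⟨2, 1, by norm_num, by norm_num, by norm_num, ?_⟩
      norm_num [Finset.sum_range_succ]
      try linarith
    · refine ⟨0, 2, by norm_num, by norm_num, by norm_num, ?_⟩
      norm_num [Finset.sum_range_succ]
    · refine ⟨2, 1, by norm_num, by norm_num, by norm_num, ?_⟩
      norm_num [Finset.sum_range_succ]
      try linarith
    · refine ⟨2, 2, by norm_num, by norm_num, by norm_num, ?_⟩
      norm_num [Finset.sum_range_succ]
      try linarith
  · -- d ≥ 3
    have hd3 : 3 ≤ d := hd3'
    set N := d*d with hN
    set k := k1 + k2 with hk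
    set l1 := d - k1 with hl1
    set l2 := d - k2 with hl2
    set k' := l1 + l2 with hk'
    set A := k1 * k2 with hA
    set A' := l1 * l2 with hA'
    have hl1e : k1 + l1 = d := by omega
    have hl2e : k2 + l2 = d := by omega
    have hAA' : A + d * k' = d*d + A' := by
      rw [hA, hA', hk']
      have e0 : d*(l1+l2) = d*l1 + d*l2 := Nat.mul_add d l1 l2
      rw [e0]
      conv_lhs => rw [show d*l1 = (k2+l2)*l1 by rw [hl2e], show d*l2 = (k1+l1)*l2 by rw [hl1e]]
      conv_rhs => rw [show d*d = (k1+l1)*(k2+l2) by rw [hl1e, hl2e]]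
      ring
    have hAN : A ≤ N := Nat.mul_le_mul hk1 hk2
    have hA'N : A' ≤ N := Nat.mul_le_mul (by omega) (by omega)
    have hkk' : k + k' = 2*d := by omega
    have hdN : d ≤ d*d := Nat.le_mul_of_pos_left d (by omega)
    have h2dN : 2*d ≤ d*d := Nat.mul_le_mul_right d (by omega)
    -- case k = 0
    rcases Nat.eq_zero_or_pos k with hk0 | hkpos
    · refine ⟨0, 0, by omega, by omega, by omega, ?_⟩
      have h1 : k1 = 0 := by omega
      have h2 : k2 = 0 := by omega
      have hA0 : A = 0 := by rw [hA, h1]; ring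
      have hA'dd : N - A' = 0 := by
        have : A' = d * d := by rw [hA', hl1, hl2, h1, h2]; simp
        omega
      rw [hA0, hA'dd] at *
      simp
    rcases le_or_gt k' q with hk'q | hqk'
    · -- case k' ≤ q  (k close to 2d)
      rcases Nat.eq_zero_or_pos k' with hk'0 | hk'pos
      · -- k' = 0 : take everything
        refine ⟨d, d, le_rfl, le_rfl, by omega, ?_⟩
        have hA2 : A = d*d := by
          have h1 : k1 = d := by omega
          have h2 : k2 = d := by omega
          rw [hA, h1, h2]
        have hA'0 : A' = 0 := by
          have : l1 = 0 := by omega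
          rw [hA', this]; ring
        have hfull : ∑ s ∈ Finset.range d, ∑ i ∈ Finset.range d, F (s + d*i)
            = ∑ x ∈ Finset.range (d*d), F x := by
          rw [Finset.sum_comm]
          exact blocksum F d d
        rw [hA2, hA'0, hfull]
        simp
        exact le_rfl
      · -- 1 ≤ k' ≤ q
        have hkd : d ≤ k := by omega
        set t := d - 1 with ht
        set m := k - (d - 1) with hm
        have hm1 : 1 ≤ m := by omega
        have hmd : m ≤ d := by omega
        have hmt : m + t = k := by omega
        have hmk' : m + k' = d + 1 := by omega
        refine ⟨m, t, hmd, by omega, by omega, ?_⟩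
        -- value of the a-part
        have hval_a : ∀ s ∈ Finset.range m, ∑ i ∈ Finset.range d, F (s + d*i)
            = F s + ((d:ℝ) - 2)*c + F (s + d*(d-1)) := by
          intro s hs
          have hsm : s < m := Finset.mem_range.mp hs
          have e1 : ∑ i ∈ Finset.range d, F (s + d*i)
              = ∑ i ∈ Finset.range (d-1), F (s + d*i) + F (s + d*(d-1)) := by
            rw [show d = (d-1)+1 by omega] at *
            rw [Finset.sum_range_succ]
            congr 1 <;> try rfl
          have e2 : ∑ i ∈ Finset.range (d-1), F (s + d*i)
              = ∑ i ∈ Finset.range (d-2), F (s + d*(i+1)) + F s := by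
            rw [show d - 1 = (d-2)+1 by omega, Finset.sum_range_succ']
            simp
          have e3 : ∑ i ∈ Finset.range (d-2), F (s + d*(i+1)) = ((d:ℝ) - 2)*c := by
            have hcc : ∀ i ∈ Finset.range (d-2), F (s + d*(i+1)) = c := by
              intro i hi
              have hid : i < d - 2 := Finset.mem_range.mp hi
              have h0 : d ≤ d * (i+1) := Nat.le_mul_of_pos_right d (by omega)
              have hmul : d * (i+1) ≤ d * (d-2) := Nat.mul_le_mul_left d (by omega)
              have hdd2 : d * (d-2) = d*d - 2*d := by rw [Nat.mul_sub]; ring_nf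
              apply hc <;> omega
            rw [Finset.sum_congr rfl hcc, Finset.sum_const, Finset.card_range, nsmul_eq_mul]
            congr 1
            push_cast [Nat.cast_sub (by omega : 2 ≤ d)]
            ring
          rw [e1, e2, e3]
          ring
        have hsum_a : ∑ s ∈ Finset.range m, ∑ i ∈ Finset.range d, F (s + d*i)
            = (∑ s ∈ Finset.range m, F s) + (m:ℝ)*((d:ℝ)-2)*c
              + ∑ s ∈ Finset.range m, F (s + d*(d-1)) := by
          rw [Finset.sum_congr rfl hval_a]
          rw [Finset.sum_add_distrib, Finset.sum_add_distrib, Finset.sum_const,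
            Finset.card_range, nsmul_eq_mul]
          ring
        have hshift : ∑ s ∈ Finset.range m, F (s + d*(d-1))
            = (∑ x ∈ Finset.range (d*(d-1) + m), F x) - ∑ x ∈ Finset.range (d*(d-1)), F x := by
          rw [← Finset.sum_range_add_sum_Ico F (Nat.le_add_right (d*(d-1)) m),
            Finset.sum_Ico_eq_sum_range]
          simp only [Nat.add_sub_cancel_left]
          rw [Finset.sum_congr rfl (fun x _ => by rw [Nat.add_comm])]
          ring
        -- bounds
        have hSA : ∑ x ∈ Finset.range A, F x
            ≤ (∑ x ∈ Finset.range m, F x) + c * ((A:ℝ) - (m:ℝ)) := by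
          apply Sle hFanti hc hNpq A m hAN (by omega)
          rcases le_or_gt A m with h | h
          · right; exact ⟨h, by omega⟩
          · left; exact ⟨by omega, by omega⟩
        have hA'k' : A' + 1 ≤ k' := prod_small l1 l2 (by omega) (by omega)
        have hSNA' : ∑ x ∈ Finset.range (N - A'), F x
            ≤ (∑ x ∈ Finset.range (d*(d-1) + m), F x)
              + c * (((N - A' : ℕ):ℝ) - ((d*(d-1) + m : ℕ):ℝ)) := by
          have hdd1 : d*(d-1) = d*d - d := by rw [Nat.mul_sub]; ring_nf
          apply Sle hFanti hc hNpq (N - A') (d*(d-1) + m) (by omega) (by omega)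
          left
          constructor
          · omega
          · omega
        have hcast1 : ((N - A' : ℕ):ℝ) = (N:ℝ) - (A':ℝ) := by
          push_cast [Nat.cast_sub hA'N]; ring
        have hdd1' : (d*(d-1) : ℕ) = d*d - d := by
          rw [Nat.mul_sub]; ring_nf
        have hAA'R : (A:ℝ) + (d:ℝ)*(k':ℝ) = (d:ℝ)*(d:ℝ) + (A':ℝ) := by exact_mod_cast hAA'
        have hNR : (N:ℝ) = (d:ℝ)*(d:ℝ) := by rw [hN]; push_cast; ring
        have hmtR : (m:ℝ) + (t:ℝ) = (k:ℝ) := by exact_mod_cast hmt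
        have hkk'R : (k:ℝ) + (k':ℝ) = 2*(d:ℝ) := by exact_mod_cast hkk'
        have htR : (t:ℝ) = (d:ℝ) - 1 := by
          have : (t:ℕ) + 1 = d := by omega
          have := congrArg (fun x : ℕ => (x:ℝ)) this
          push_cast at this
          linarith
        have hcast2 : ((d*(d-1) + m : ℕ):ℝ) = (d:ℝ)*((d:ℝ)-1) + (m:ℝ) := by
          push_cast [Nat.cast_sub (by omega : 1 ≤ d)]; ring
        rw [hsum_a, hshift]
        have hbsum : ∑ x ∈ Finset.range (d*t), F x = ∑ x ∈ Finset.range (d*(d-1)), F x := by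
          rw [ht]
        rw [hbsum]
        have hmk'R : (m:ℝ) + (k':ℝ) = (d:ℝ) + 1 := by exact_mod_cast hmk'
        have hcid : c * ((A:ℝ) - (m:ℝ)) + c * (((N:ℝ) - (A':ℝ)) - ((d:ℝ)*((d:ℝ)-1) + (m:ℝ)))
            = (m:ℝ)*((d:ℝ)-2)*c := by
          linear_combination c * hAA'R + c * hNR - c * (d:ℝ) * hmk'R
        rw [hcast1] at hSNA'
        rw [hcast2] at hSNA'
        linarith
    · -- case q + 1 ≤ k'
      set t := max 1 (k - (d - q)) with ht
      have ht1 : 1 ≤ t := le_max_left _ _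
      have hkub : k ≤ 2*d - q - 1 := by omega
      have htd : t ≤ d - 1 := by
        rw [ht]; omega
      have htk : t ≤ k := by rw [ht]; omega
      set m := k - t with hm
      have hmt : m + t = k := by omega
      have hmdq : m ≤ d - q := by rw [hm, ht]; omega
      refine ⟨m, t, by omega, by omega, by omega, ?_⟩
      have hval_a : ∀ s ∈ Finset.range m, ∑ i ∈ Finset.range d, F (s + d*i)
          = F s + ((d:ℝ) - 1)*c := by
        intro s hs
        have hsm : s < m := Finset.mem_range.mp hs
        have e2 : ∑ i ∈ Finset.range d, F (s + d*i)
            = ∑ i ∈ Finset.range (d-1), F (s + d*(i+1)) + F s := by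
          rw [show d = (d-1)+1 by omega, Finset.sum_range_succ']
          simp
        have e3 : ∑ i ∈ Finset.range (d-1), F (s + d*(i+1)) = ((d:ℝ) - 1)*c := by
          have hcc : ∀ i ∈ Finset.range (d-1), F (s + d*(i+1)) = c := by
            intro i hi
            have hid : i < d - 1 := Finset.mem_range.mp hi
            have h0 : d ≤ d * (i+1) := Nat.le_mul_of_pos_right d (by omega)
            have hmul : d * (i+1) ≤ d * (d-1) := Nat.mul_le_mul_left d (by omega)
            have hdd1 : d*(d-1) = d*d - d := by rw [Nat.mul_sub]; ring_nf
            apply hc <;> omega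
          rw [Finset.sum_congr rfl hcc, Finset.sum_const, Finset.card_range, nsmul_eq_mul]
          congr 1
          push_cast [Nat.cast_sub (by omega : 1 ≤ d)]
          ring
        rw [e2, e3]
        ring
      have hsum_a : ∑ s ∈ Finset.range m, ∑ i ∈ Finset.range d, F (s + d*i)
          = (∑ s ∈ Finset.range m, F s) + (m:ℝ)*((d:ℝ)-1)*c := by
        rw [Finset.sum_congr rfl hval_a, Finset.sum_add_distrib, Finset.sum_const,
          Finset.card_range, nsmul_eq_mul]
        ring
      -- bounds
      have hSA : ∑ x ∈ Finset.range A, F x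
          ≤ (∑ x ∈ Finset.range m, F x) + c * ((A:ℝ) - (m:ℝ)) := by
        apply Sle hFanti hc hNpq A m hAN (by omega)
        rcases le_or_gt A m with h | h
        · right; exact ⟨h, by omega⟩
        · left
          refine ⟨by omega, ?_⟩
          -- p ≤ m
          by_cases hsmall : k1 ≤ 1 ∨ k2 ≤ 1
          · have := prod_small' k1 k2 (by omega) hsmall
            rw [hm, ht]
            omega
          · push_neg at hsmall
            have hk4 : 4 ≤ k := by omega
            rw [hm, ht]
            omega
      have hA'led : A' ≤ d*(d-1) := by
        have : k1 = 0 → k2 = 0 → False := by intro h1 h2; omega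
        rcases Nat.eq_zero_or_pos k1 with h1 | h1
        · have hk2pos : 1 ≤ k2 := by omega
          calc A' = l1 * l2 := rfl
            _ ≤ d * (d-1) := Nat.mul_le_mul (by omega) (by omega)
        · calc A' = l1 * l2 := rfl
            _ ≤ (d-1) * d := Nat.mul_le_mul (by omega) (by omega)
            _ = d * (d-1) := Nat.mul_comm _ _
      have hSNA' : ∑ x ∈ Finset.range (N - A'), F x
          ≤ (∑ x ∈ Finset.range d, F x) + c * (((N - A' : ℕ):ℝ) - (d:ℝ)) := by
        have hdd1 : d*(d-1) = d*d - d := by rw [Nat.mul_sub]; ring_nf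
        have hdN : d ≤ d*d := Nat.le_mul_of_pos_left d (by omega)
        apply Sle hFanti hc hNpq (N - A') d (by omega) (by omega)
        left
        constructor
        · omega
        · omega
      have hSdt : ∑ x ∈ Finset.range d, F x
          ≤ (∑ x ∈ Finset.range (d*t), F x) + c * ((d:ℝ) - ((d*t : ℕ):ℝ)) := by
        have hdd1 : d*(d-1) = d*d - d := by rw [Nat.mul_sub]; ring_nf
        have hdN : d ≤ d*d := Nat.le_mul_of_pos_left d (by omega)
        have hmul : d * t ≤ d * (d-1) := Nat.mul_le_mul_left d htd
        apply Sle hFanti hc hNpq d (d*t) (by omega) (by omega)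
        right
        constructor
        · exact Nat.le_mul_of_pos_right d (by omega)
        · omega
      have hcast1 : ((N - A' : ℕ):ℝ) = (N:ℝ) - (A':ℝ) := by
        push_cast [Nat.cast_sub hA'N]; ring
      have hAA'R : (A:ℝ) + (d:ℝ)*(k':ℝ) = (d:ℝ)*(d:ℝ) + (A':ℝ) := by exact_mod_cast hAA'
      have hNR : (N:ℝ) = (d:ℝ)*(d:ℝ) := by rw [hN]; push_cast; ring
      have hmtR : (m:ℝ) + (t:ℝ) = (k:ℝ) := by exact_mod_cast hmt
      have hkk'R : (k:ℝ) + (k':ℝ) = 2*(d:ℝ) := by exact_mod_cast hkk'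
      have hdtR : ((d*t : ℕ):ℝ) = (d:ℝ)*(t:ℝ) := by push_cast; ring
      rw [hsum_a]
      rw [hcast1] at hSNA'
      rw [hdtR] at hSdt
      have hcid : c * ((A:ℝ) - (m:ℝ)) + c * (((N:ℝ) - (A':ℝ)) - (d:ℝ))
          + c * ((d:ℝ) - (d:ℝ)*(t:ℝ)) = (m:ℝ)*((d:ℝ)-1)*c := by
        linear_combination c * hAA'R + c * hNR - c * (d:ℝ) * hmtR - c * (d:ℝ) * hkk'R
      linarith

lemma sum_fin_filter_lt {M : Type*} [AddCommMonoid M] (d m : ℕ) (hm : m ≤ d) (f : ℕ → M) :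
    ∑ i ∈ Finset.univ.filter (fun i : Fin d => (i : ℕ) < m), f ↑i
      = ∑ x ∈ Finset.range m, f x := by
  rw [Finset.sum_filter, Fin.sum_univ_eq_sum_range (fun x => if x < m then f x else 0) d,
    ← Finset.sum_filter]
  congr 1
  ext x
  simp only [Finset.mem_filter, Finset.mem_range]
  omega

lemma card_fin_filter_lt (d m : ℕ) (hm : m ≤ d) :
    (Finset.univ.filter (fun i : Fin d => (i : ℕ) < m)).card = m := by
  rw [Finset.card_eq_sum_ones, sum_fin_filter_lt d m hm (fun _ => (1:ℕ)), Finset.sum_const,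
    Finset.card_range, smul_eq_mul, mul_one]

lemma eigsum {n : Type*} [Fintype n] [DecidableEq n] {A : Matrix n n ℂ} (hA : A.IsHermitian) :
    ∑ i, hA.eigenvalues i = A.trace.re := by
  have hU := hA.eigenvectorUnitary.2
  have hUsU : (hA.eigenvectorUnitary : Matrix n n ℂ)
      * star (hA.eigenvectorUnitary : Matrix n n ℂ) = 1 := Matrix.mem_unitaryGroup_iff.mp hU
  have h2 : (star (hA.eigenvectorUnitary : Matrix n n ℂ) * A
      * (hA.eigenvectorUnitary : Matrix n n ℂ)).trace = A.trace := by
    rw [Matrix.trace_mul_cycle, hUsU, Matrix.one_mul]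
  have hdiag : star (hA.eigenvectorUnitary : Matrix n n ℂ) * A
      * (hA.eigenvectorUnitary : Matrix n n ℂ) = Matrix.diagonal (RCLike.ofReal ∘ hA.eigenvalues) := by
    have h := hA.conjStarAlgAut_star_eigenvectorUnitary
    rw [Unitary.conjStarAlgAut_apply, Unitary.coe_star, star_star] at h
    exact h
  rw [← h2, hdiag, Matrix.trace_diagonal]
  simp [Complex.re_sum]

lemma trace_ptrace1 {d1 d2 : ℕ} (C : Matrix (Fin d1 × Fin d2) (Fin d1 × Fin d2) ℂ) :
    (ptrace1 C).trace = C.trace := by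
  rw [Matrix.trace, Matrix.trace]
  simp only [Matrix.diag, ptrace1, Matrix.of_apply, Fintype.sum_prod_type]
  rw [Finset.sum_comm]

lemma trace_ptrace2 {d1 d2 : ℕ} (C : Matrix (Fin d1 × Fin d2) (Fin d1 × Fin d2) ℂ) :
    (ptrace2 C).trace = C.trace := by
  rw [Matrix.trace, Matrix.trace]
  simp only [Matrix.diag, ptrace2, Matrix.of_apply, Fintype.sum_prod_type]

lemma aux_main (d : ℕ) (hd : 2 ≤ d)
    (C : Matrix (Fin d × Fin d) (Fin d × Fin d) ℂ) (hC : C.IsHermitian)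
    (htr1 : (ptrace1 C).IsHermitian) (htr2 : (ptrace2 C).IsHermitian)
    (μ : Fin (d * d) → ℝ) (hμ : Antitone μ)
    (g : Fin (d * d) ≃ Fin d × Fin d) (hg : ∀ k, μ k = hC.eigenvalues (g k))
    (hn : ∃ n : ℕ, 1 ≤ n ∧ n ≤ 4 ∧
      ∀ i j : Fin (d * d), n - 1 ≤ (i : ℕ) → (i : ℕ) ≤ d * d - 4 + n - 1 →
        n - 1 ≤ (j : ℕ) → (j : ℕ) ≤ d * d - 4 + n - 1 → μ i = μ j) :
    (∀ k : ℕ, maxSum (Sum.elim htr1.eigenvalues htr2.eigenvalues) k ≤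
      maxSum (Sum.elim (fun s : Fin d => ∑ i : Fin d, μ (finProdFinEquiv (i, s)))
                (fun j : Fin d => ∑ s : Fin d, μ (finProdFinEquiv (j, s)))) k) ∧
    ∑ i, Sum.elim htr1.eigenvalues htr2.eigenvalues i =
      ∑ j, Sum.elim (fun s : Fin d => ∑ i : Fin d, μ (finProdFinEquiv (i, s)))
                (fun j : Fin d => ∑ s : Fin d, μ (finProdFinEquiv (j, s))) j := by
  classical
  obtain ⟨n, hn1, hn4, heq⟩ := hn
  have hN4 : 4 ≤ d*d := Nat.mul_le_mul hd hd
  set a : Fin d → ℝ := fun s : Fin d => ∑ i : Fin d, μ (finProdFinEquiv (i, s)) with ha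
  set b : Fin d → ℝ := fun j : Fin d => ∑ s : Fin d, μ (finProdFinEquiv (j, s)) with hb
  set F : ℕ → ℝ := fun x => if h : x < d*d then μ ⟨x, h⟩ else 0 with hF
  have hFval : ∀ i : Fin (d*d), F ↑i = μ i := by
    intro i
    simp only [hF, i.isLt, dif_pos, Fin.eta]
  have hpN : n - 1 < d*d := by omega
  have hFanti : ∀ i j : ℕ, i ≤ j → j < d*d → F j ≤ F i := by
    intro i j hij hj
    have hiN : i < d*d := lt_of_le_of_lt hij hj
    have h := hμ (show (⟨i, hiN⟩ : Fin (d*d)) ≤ ⟨j, hj⟩ from hij)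
    simpa only [hF, dif_pos hiN, dif_pos hj] using h
  have hc : ∀ x, (n-1) ≤ x → x + (4-n) + 1 ≤ d*d → F x = F (n-1) := by
    intro x hx1 hx2
    have hxN : x < d*d := by omega
    have h := heq ⟨x, hxN⟩ ⟨n-1, hpN⟩ (by simpa using hx1) (by simp; omega)
      (by simp) (by simp; omega)
    simpa only [hF, dif_pos hxN, dif_pos hpN] using h
  have hfilt : ∀ r : ℕ, r ≤ d*d →
      ∑ i ∈ Finset.univ.filter (fun i : Fin (d*d) => (i:ℕ) < r), μ i
        = ∑ x ∈ Finset.range r, F x := by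
    intro r hr
    rw [← sum_fin_filter_lt (d*d) r hr F]
    exact Finset.sum_congr rfl fun i _ => (hFval i).symm
  have haval : ∀ s : Fin d, a s = ∑ i ∈ Finset.range d, F ((s:ℕ) + d * i) := by
    intro s
    rw [ha]
    rw [← Fin.sum_univ_eq_sum_range (fun i => F ((s:ℕ) + d * i)) d]
    apply Finset.sum_congr rfl
    intro i _
    rw [← hFval]
    congr 1
  have hbval : ∀ j : Fin d, b j = ∑ s ∈ Finset.range d, F (s + d * (j:ℕ)) := by
    intro j
    rw [hb]
    rw [← Fin.sum_univ_eq_sum_range (fun s => F (s + d * (j:ℕ))) d]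
    apply Finset.sum_congr rfl
    intro s _
    rw [← hFval]
    congr 1
  constructor
  · intro k
    rcases le_or_gt k (Fintype.card (Fin d ⊕ Fin d)) with hk | hk
    · apply maxSum_le _ k hk
      intro A hA
      rw [← Finset.toLeft_disjSum_toRight (u := A), Finset.sum_sumElim]
      have hS1d : A.toLeft.card ≤ d := by
        have := Finset.card_le_univ A.toLeft
        simpa using this
      have hS2d : A.toRight.card ≤ d := by
        have := Finset.card_le_univ A.toRight
        simpa using this
      have hk12 : A.toLeft.card + A.toRight.card = k := by
        rw [← hA]
        exact Finset.card_toLeft_add_card_toRight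
      have hB := stepB C hC htr1 htr2 μ hμ g hg A.toLeft A.toRight
      have hAle : A.toLeft.card * A.toRight.card ≤ d*d := Nat.mul_le_mul hS1d hS2d
      have hA'le : d*d - (d - A.toLeft.card)*(d - A.toRight.card) ≤ d*d := Nat.sub_le _ _
      rw [hfilt _ hAle, hfilt _ hA'le] at hB
      obtain ⟨m, t, hmd, htd, hmtk, hstep⟩ := stepC hd F (F (n-1)) (n-1) (4-n) (by omega)
        hFanti hc A.toLeft.card A.toRight.card hS1d hS2d
      refine le_trans hB (le_trans hstep ?_)
      have hval : (∑ s ∈ Finset.range m, ∑ i ∈ Finset.range d, F (s + d*i))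
            + ∑ x ∈ Finset.range (d*t), F x
          = ∑ x ∈ (Finset.univ.filter (fun i : Fin d => (i:ℕ) < m)).disjSum
              (Finset.univ.filter (fun j : Fin d => (j:ℕ) < t)), (Sum.elim a b) x := by
        rw [Finset.sum_sumElim]
        congr 1
        · rw [← sum_fin_filter_lt d m hmd (fun s => ∑ i ∈ Finset.range d, F (s + d*i))]
          exact Finset.sum_congr rfl fun s _ => (haval s).symm
        · rw [← blocksum F d t,
            ← sum_fin_filter_lt d t htd (fun j => ∑ x ∈ Finset.range d, F (x + d*j))]
          exact Finset.sum_congr rfl fun j _ => (hbval j).symm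
      rw [hval]
      have hle := le_maxSum (Sum.elim a b)
        ((Finset.univ.filter (fun i : Fin d => (i:ℕ) < m)).disjSum
          (Finset.univ.filter (fun j : Fin d => (j:ℕ) < t)))
      rwa [Finset.card_disjSum, card_fin_filter_lt d m hmd, card_fin_filter_lt d t htd,
        hmtk, hk12] at hle
    · rw [maxSum_of_card_lt _ k hk, maxSum_of_card_lt _ k hk]
  · rw [Fintype.sum_sum_type, Fintype.sum_sum_type]
    simp only [Sum.elim_inl, Sum.elim_inr]
    have h1 : ∑ s, htr1.eigenvalues s = C.trace.re := by rw [eigsum htr1, trace_ptrace1]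
    have h2 : ∑ j, htr2.eigenvalues j = C.trace.re := by rw [eigsum htr2, trace_ptrace2]
    have h3 : C.trace.re = ∑ kk : Fin (d*d), μ kk := by
      rw [← eigsum hC, ← Equiv.sum_comp g (fun ρ => hC.eigenvalues ρ)]
      exact Finset.sum_congr rfl fun kk _ => (hg kk).symm
    have hp : ∑ p : Fin d × Fin d, μ (finProdFinEquiv p) = ∑ kk : Fin (d*d), μ kk :=
      Equiv.sum_comp finProdFinEquiv μ
    have hpt := Fintype.sum_prod_type (f := fun p : Fin d × Fin d => μ (finProdFinEquiv p))
    have h4 : ∑ s : Fin d, a s = ∑ kk : Fin (d*d), μ kk := by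
      rw [ha]
      exact (Finset.sum_comm.trans hpt.symm).trans hp
    have h5 : ∑ j : Fin d, b j = ∑ kk : Fin (d*d), μ kk := by
      rw [hb]
      exact hpt.symm.trans hp
    rw [h1, h2, h4, h5, ← h3]

theorem sufficient_conditions_square_case (d : ℕ) (hd : 2 ≤ d)
    (C : Matrix (Fin d × Fin d) (Fin d × Fin d) ℂ) (hC : C.IsHermitian)
    (htr1 : (ptrace1 C).IsHermitian) (htr2 : (ptrace2 C).IsHermitian)
    -- `μ` lists the eigenvalues of `C` in decreasing order
    (μ : Fin (d * d) → ℝ) (hμ : Antitone μ)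
    (g : Fin (d * d) ≃ Fin d × Fin d) (hg : ∀ k, μ k = hC.eigenvalues (g k))
    -- `λ_n = … = λ_{d²-4+n}` for some `n ∈ {1,2,3,4}` (`μ` is 0-indexed)
    (hn : ∃ n : ℕ, 1 ≤ n ∧ n ≤ 4 ∧
      ∀ i j : Fin (d * d), n - 1 ≤ (i : ℕ) → (i : ℕ) ≤ d * d - 4 + n - 1 →
        n - 1 ≤ (j : ℕ) → (j : ℕ) ≤ d * d - 4 + n - 1 → μ i = μ j) :
    Majorizes (Sum.elim htr1.eigenvalues htr2.eigenvalues)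
      (Sum.elim (fun s : Fin d => ∑ i : Fin d, μ (finProdFinEquiv (i, s)))
                (fun j : Fin d => ∑ s : Fin d, μ (finProdFinEquiv (j, s)))) := by
  exact aux_main d hd C hC htr1 htr2 μ hμ g hg hn
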